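/- (Local existence for the singular initial value problem.) Let N ≥ 2, λ > 0, ζ ∈ ℝ, and let f : ℝ → ℝ be locally Lipschitz. Then there exists δ > 0 and a function u ∈ C²([0,δ]) with u(0) = ζ, u'(0) = 0, |u'(r)| < 1 for all r ∈ [0,δ], satisfying (u'(r)/√(1−u'(r)²))' + ((N−1)/r)·u'(r)/√(1−u'(r)²) + λ·f(u(r)) = 0 for all r ∈ (0,δ]. Equivalently, u satisfies the fixed point equation u(r) = ζ + ∫₀^r (φ')^{-1}( −(1/t^{N−1})∫₀^t s^{N−1} λ f(u(s)) ds ) dt on [0,δ], where φ'(s) = s/√(1−s²). Moreover u is the unique solution of this fixed point equation in a closed ball of C([0,δ]) centered at the constant function ζ. -/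

import Mathlib

open Set Filter

open Set Filter Topology intervalIntegral
open scoped Interval

noncomputable def psiFn (y : ℝ) : ℝ := y / Real.sqrt (1 + y ^ 2)

lemma one_add_sq_pos (y : ℝ) : 0 < 1 + y ^ 2 := by positivity

lemma sqrtP (y : ℝ) : 0 < Real.sqrt (1 + y ^ 2) := Real.sqrt_pos.2 (one_add_sq_pos y)

lemma sqrtP_sq (y : ℝ) : Real.sqrt (1 + y ^ 2) ^ 2 = 1 + y ^ 2 :=
  Real.sq_sqrt (one_add_sq_pos y).le

lemma sqrtP_ge_one (y : ℝ) : 1 ≤ Real.sqrt (1 + y ^ 2) := by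
  have h : Real.sqrt 1 ≤ Real.sqrt (1 + y ^ 2) := Real.sqrt_le_sqrt (by nlinarith [sq_nonneg y])
  simpa using h

lemma psi_zero : psiFn 0 = 0 := by simp [psiFn]

lemma psi_abs_le (y : ℝ) : |psiFn y| ≤ |y| := by
  rw [psiFn, abs_div, abs_of_pos (sqrtP y)]
  exact div_le_self (abs_nonneg y) (sqrtP_ge_one y)

lemma psi_abs_lt_one (y : ℝ) : |psiFn y| < 1 := by
  rw [psiFn, abs_div, abs_of_pos (sqrtP y), div_lt_one (sqrtP y),
    show |y| = Real.sqrt (y ^ 2) from (Real.sqrt_sq_eq_abs y).symm]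
  exact Real.sqrt_lt_sqrt (by positivity) (by linarith)

lemma sqrt_one_sub_psi (y : ℝ) : Real.sqrt (1 - psiFn y ^ 2) = 1 / Real.sqrt (1 + y ^ 2) := by
  have h : 1 - psiFn y ^ 2 = 1 / (1 + y ^ 2) := by
    rw [psiFn, div_pow, sqrtP_sq]
    field_simp
    ring
  rw [h, one_div, Real.sqrt_inv, one_div]

lemma psi_inv (y : ℝ) : psiFn y / Real.sqrt (1 - psiFn y ^ 2) = y := by
  rw [sqrt_one_sub_psi, psiFn]
  field_simp

lemma psi_hasDerivAt (y : ℝ) :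
    HasDerivAt psiFn ((Real.sqrt (1 + y ^ 2))⁻¹ ^ 3) y := by
  have h1 : HasDerivAt (fun y : ℝ => 1 + y ^ 2) (2 * y) y := by
    simpa using ((hasDerivAt_pow 2 y).const_add 1)
  have hs : HasDerivAt (fun y : ℝ => Real.sqrt (1 + y ^ 2)) (y / Real.sqrt (1 + y ^ 2)) y := by
    have := (Real.hasDerivAt_sqrt (one_add_sq_pos y).ne').comp y h1
    exact this.congr_deriv (by field_simp)
  have hd : HasDerivAt psiFn
      ((1 * Real.sqrt (1 + y ^ 2) - y * (y / Real.sqrt (1 + y ^ 2))) /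
        Real.sqrt (1 + y ^ 2) ^ 2) y :=
    (hasDerivAt_id y).div hs (sqrtP y).ne'
  convert hd using 1
  have h2 := sqrtP_sq y
  have h3 := (sqrtP y).ne'
  field_simp
  nlinarith [sqrtP y, sqrtP_sq y]

lemma psi_differentiable : Differentiable ℝ psiFn := fun y => (psi_hasDerivAt y).differentiableAt

lemma psi_lipschitz : LipschitzWith 1 psiFn := by
  apply lipschitzWith_of_nnnorm_deriv_le psi_differentiable
  intro x
  rw [← NNReal.coe_le_coe, coe_nnnorm, (psi_hasDerivAt x).deriv, Real.norm_eq_abs]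
  have h1 := sqrtP_ge_one x
  have h2 := sqrtP x
  rw [abs_of_pos (by positivity)]
  rw [inv_pow]
  exact inv_le_one_of_one_le₀ (one_le_pow₀ h1)

lemma psi_contDiff : ContDiff ℝ 1 psiFn := by
  rw [contDiff_iff_contDiffAt]
  intro y
  have hinner : ContDiffAt ℝ 1 (fun y : ℝ => 1 + y ^ 2) y :=
    (contDiff_const.add (contDiff_id.pow 2)).contDiffAt
  have hsq : ContDiffAt ℝ 1 (fun y : ℝ => Real.sqrt (1 + y ^ 2)) y :=
    (Real.contDiffAt_sqrt (one_add_sq_pos y).ne').comp y hinner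
  exact contDiffAt_id.div hsq (sqrtP y).ne'

lemma psi_lip_bound (a b : ℝ) : |psiFn a - psiFn b| ≤ |a - b| := by
  have := psi_lipschitz.dist_le_mul a b
  simpa [Real.dist_eq] using this

noncomputable def primF (n : ℕ) (h : ℝ → ℝ) (t : ℝ) : ℝ := ∫ s in (0:ℝ)..t, s ^ n * h s

noncomputable def Wfn (n : ℕ) (h : ℝ → ℝ) (t : ℝ) : ℝ := -(1 / t ^ n) * primF n h t

lemma primF_zero (n : ℕ) (h : ℝ → ℝ) : primF n h 0 = 0 := by simp [primF]

lemma Wfn_zero (n : ℕ) (h : ℝ → ℝ) : Wfn n h 0 = 0 := by simp [Wfn, primF_zero]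

lemma integrand_cont {n : ℕ} {h : ℝ → ℝ} (hh : Continuous h) :
    Continuous fun s : ℝ => s ^ n * h s := (continuous_pow n).mul hh

lemma primF_cont {n : ℕ} {h : ℝ → ℝ} (hh : Continuous h) : Continuous (primF n h) :=
  intervalIntegral.continuous_primitive
    (fun a b => (integrand_cont hh).intervalIntegrable a b) 0

lemma primF_hasDerivAt {n : ℕ} {h : ℝ → ℝ} (hh : Continuous h) (t : ℝ) :
    HasDerivAt (primF n h) (t ^ n * h t) t :=
  ((integrand_cont hh).integral_hasStrictDerivAt 0 t).hasDerivAt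

lemma primF_bound {n : ℕ} {h : ℝ → ℝ} {C t : ℝ} (hC : ∀ s, |h s| ≤ C) :
    |primF n h t| ≤ C * |t| ^ (n + 1) := by
  have hb : ∀ s ∈ Ι (0:ℝ) t, ‖s ^ n * h s‖ ≤ |t| ^ n * C := by
    intro s hs
    have hs' : |s| ≤ |t| := by
      rcases le_or_gt 0 t with h' | h'
      · rw [uIoc_of_le h'] at hs
        rw [abs_of_pos hs.1, abs_of_nonneg h']; exact hs.2
      · rw [uIoc_of_ge h'.le] at hs
        rw [abs_of_nonpos hs.2, abs_of_neg h']
        linarith [hs.1]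
    rw [Real.norm_eq_abs, abs_mul, abs_pow]
    exact mul_le_mul (pow_le_pow_left₀ (abs_nonneg s) hs' n) (hC s) (abs_nonneg _)
      (by positivity)
  have := intervalIntegral.norm_integral_le_of_norm_le_const hb
  rw [Real.norm_eq_abs] at this
  calc |primF n h t| ≤ |t| ^ n * C * |t - 0| := this
    _ = C * |t| ^ (n + 1) := by rw [sub_zero]; ring

lemma Wfn_bound {n : ℕ} {h : ℝ → ℝ} {C : ℝ} (hC : ∀ s, |h s| ≤ C) (t : ℝ) :
    |Wfn n h t| ≤ C * |t| := by
  rcases eq_or_ne t 0 with rfl | ht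
  · simp [Wfn_zero]
  · have htp : (0:ℝ) < |t| := abs_pos.2 ht
    have hp := primF_bound (n := n) (h := h) hC (t := t)
    rw [Wfn, abs_mul, abs_neg, abs_div, abs_one, abs_pow, div_mul_eq_mul_div, one_mul,
      div_le_iff₀ (by positivity)]
    calc |primF n h t| ≤ C * |t| ^ (n + 1) := hp
      _ = C * |t| * |t| ^ n := by ring

lemma Wfn_cont {n : ℕ} {h : ℝ → ℝ} (hh : Continuous h) {C : ℝ} (hC : ∀ s, |h s| ≤ C) :
    Continuous (Wfn n h) := by
  rw [continuous_iff_continuousAt]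
  intro t
  rcases eq_or_ne t 0 with rfl | ht
  · have : Tendsto (Wfn n h) (𝓝 0) (𝓝 0) := by
      apply squeeze_zero_norm (a := fun t : ℝ => C * |t|)
        (fun t => by rw [Real.norm_eq_abs]; exact Wfn_bound hC t)
      have : Continuous fun t : ℝ => C * |t| := continuous_const.mul _root_.continuous_abs
      simpa using this.tendsto 0
    rw [ContinuousAt, Wfn_zero]; exact this
  · exact ((continuousAt_const.div ((continuous_pow n).continuousAt) (pow_ne_zero n ht)).neg.mul
      (primF_cont hh).continuousAt)

lemma Wfn_hasDerivAt {n : ℕ} {h : ℝ → ℝ} (hh : Continuous h) (hn : 1 ≤ n) {t : ℝ} (ht : t ≠ 0) :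
    HasDerivAt (Wfn n h) ((n : ℝ) * primF n h t / t ^ (n + 1) - h t) t := by
  obtain ⟨m, rfl⟩ : ∃ m, n = m + 1 := ⟨n - 1, (Nat.succ_pred_eq_of_pos hn).symm⟩
  have h2 : HasDerivAt (fun t : ℝ => (t ^ (m + 1))⁻¹)
      (-(↑(m + 1) * t ^ m) / (t ^ (m + 1)) ^ 2) t := by
    exact ((hasDerivAt_pow (m + 1) t).inv (pow_ne_zero _ ht)).congr_deriv (by simp)
  have h1 : HasDerivAt (fun t : ℝ => -(1 / t ^ (m + 1)))
      ((↑(m + 1) : ℝ) * t ^ m / (t ^ (m + 1)) ^ 2) t := by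
    simpa [neg_div, one_div, Pi.neg_def] using h2.neg
  have hprod := h1.mul (primF_hasDerivAt (n := m + 1) hh t)
  unfold Wfn
  refine hprod.congr_deriv ?_
  have hpne : t ^ (m + 1) ≠ 0 := pow_ne_zero _ ht
  field_simp
  ring

lemma tendsto_ratio {n : ℕ} {h : ℝ → ℝ} (hh : Continuous h) :
    Tendsto (fun t => primF n h t / t ^ (n + 1)) (𝓝[>] (0:ℝ)) (𝓝 (h 0 / ((n:ℝ) + 1))) := by
  rw [Metric.tendsto_nhdsWithin_nhds]
  intro ε hε
  obtain ⟨δ₁, hδ₁, hδ⟩ := Metric.continuousAt_iff.1 hh.continuousAt (ε / 2) (by linarith)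
  refine ⟨δ₁, hδ₁, ?_⟩
  intro t htI htd
  have ht : (0:ℝ) < t := htI
  have htne : t ≠ 0 := ht.ne'
  have htd' : t < δ₁ := by rwa [Real.dist_eq, sub_zero, abs_of_pos ht] at htd
  have hint1 : IntervalIntegrable (fun s => s ^ n * h s) MeasureTheory.volume 0 t :=
    (integrand_cont hh).intervalIntegrable _ _
  have hint2 : IntervalIntegrable (fun s : ℝ => s ^ n * h 0) MeasureTheory.volume 0 t :=
    ((continuous_pow n).mul continuous_const).intervalIntegrable _ _
  have key : primF n h t - h 0 * t ^ (n + 1) / ((n:ℝ) + 1)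
      = ∫ s in (0:ℝ)..t, s ^ n * (h s - h 0) := by
    have e1 : (∫ s in (0:ℝ)..t, s ^ n * (h s - h 0))
        = (∫ s in (0:ℝ)..t, s ^ n * h s) - ∫ s in (0:ℝ)..t, s ^ n * h 0 := by
      rw [← intervalIntegral.integral_sub hint1 hint2]
      congr 1; ext s; ring
    have e2 : (∫ s in (0:ℝ)..t, s ^ n * h 0) = h 0 * t ^ (n + 1) / ((n:ℝ) + 1) := by
      rw [intervalIntegral.integral_mul_const, integral_pow]
      push_cast
      rw [zero_pow (Nat.succ_ne_zero n)]
      ring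
    rw [e1, e2, primF]
  have hbound : |∫ s in (0:ℝ)..t, s ^ n * (h s - h 0)| ≤ t ^ n * (ε / 2) * |t - 0| := by
    have hb : ∀ s ∈ Ι (0:ℝ) t, ‖s ^ n * (h s - h 0)‖ ≤ t ^ n * (ε / 2) := by
      intro s hs
      rw [uIoc_of_le ht.le] at hs
      have h0s : 0 < s := hs.1
      have hst : s ≤ t := hs.2
      have hds : dist s 0 < δ₁ := by
        rw [Real.dist_eq, sub_zero, abs_of_pos h0s]; exact lt_of_le_of_lt hst htd'
      have hval := hδ hds
      rw [Real.dist_eq] at hval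
      rw [Real.norm_eq_abs, abs_mul, abs_pow, abs_of_pos h0s]
      exact mul_le_mul (pow_le_pow_left₀ h0s.le hst n) hval.le (abs_nonneg _) (by positivity)
    have := intervalIntegral.norm_integral_le_of_norm_le_const hb
    rwa [Real.norm_eq_abs] at this
  have htp : (0:ℝ) < t ^ (n + 1) := pow_pos ht _
  have heq : primF n h t / t ^ (n + 1) - h 0 / ((n:ℝ) + 1)
      = (primF n h t - h 0 * t ^ (n + 1) / ((n:ℝ) + 1)) / t ^ (n + 1) := by
    have : ((n:ℝ) + 1) ≠ 0 := by positivity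
    field_simp
  rw [Real.dist_eq, heq, key, abs_div, abs_of_pos htp, div_lt_iff₀ htp]
  calc |∫ s in (0:ℝ)..t, s ^ n * (h s - h 0)| ≤ t ^ n * (ε / 2) * |t - 0| := hbound
    _ = (ε / 2) * t ^ (n + 1) := by rw [sub_zero, abs_of_pos ht]; ring
    _ < ε * t ^ (n + 1) := by nlinarith

lemma Wfn_hasDerivWithinAt_zero {n : ℕ} {h : ℝ → ℝ} (hh : Continuous h) {δ : ℝ} (hδ : 0 < δ) :
    HasDerivWithinAt (Wfn n h) (-(h 0 / ((n:ℝ) + 1))) (Icc 0 δ) 0 := by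
  rw [hasDerivWithinAt_iff_tendsto_slope, Icc_diff_left]
  have hmain : Tendsto (fun t => -(primF n h t / t ^ (n + 1))) (𝓝[Ioc 0 δ] 0)
      (𝓝 (-(h 0 / ((n:ℝ) + 1)))) :=
    ((tendsto_ratio hh).neg).mono_left (nhdsWithin_mono 0 Ioc_subset_Ioi_self)
  apply hmain.congr'
  filter_upwards [self_mem_nhdsWithin] with t ht
  have htne : t ≠ 0 := ne_of_gt ht.1
  have : slope (Wfn n h) 0 t = Wfn n h t / t := by
    rw [slope_def_field]; rw [Wfn_zero]; ring_nf
  rw [this, Wfn, pow_succ]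
  field_simp

lemma Wfn_contDiffOn {n : ℕ} {h : ℝ → ℝ} (hh : Continuous h) (hn : 1 ≤ n) {δ : ℝ} (hδ : 0 < δ) :
    ContDiffOn ℝ 1 (Wfn n h) (Icc 0 δ) := by
  set D : ℝ → ℝ := fun t =>
    if t = 0 then -(h 0 / ((n:ℝ) + 1)) else (n : ℝ) * primF n h t / t ^ (n + 1) - h t with hD
  have hDat : ∀ t ∈ Icc (0:ℝ) δ, HasDerivWithinAt (Wfn n h) (D t) (Icc 0 δ) t := by
    intro t ht
    rcases eq_or_ne t 0 with rfl | htne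
    · simpa [hD] using Wfn_hasDerivWithinAt_zero hh hδ
    · have := (Wfn_hasDerivAt hh hn htne).hasDerivWithinAt (s := Icc 0 δ)
      simpa [hD, if_neg htne] using this
  have hDcont : ContinuousOn D (Icc 0 δ) := by
    intro t ht
    rcases eq_or_ne t 0 with rfl | htne
    · rw [show Icc (0:ℝ) δ = insert 0 (Ioc 0 δ) from (Ioc_insert_left hδ.le).symm,
        continuousWithinAt_insert_self]
      have hlim : Tendsto (fun t => (n : ℝ) * (primF n h t / t ^ (n + 1)) - h t)
          (𝓝[Ioc 0 δ] 0) (𝓝 ((n : ℝ) * (h 0 / ((n:ℝ) + 1)) - h 0)) := by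
        apply Tendsto.sub
        · exact ((tendsto_ratio hh).const_mul _).mono_left (nhdsWithin_mono 0 Ioc_subset_Ioi_self)
        · exact (hh.continuousAt.tendsto).mono_left nhdsWithin_le_nhds
      have halg : (n : ℝ) * (h 0 / ((n:ℝ) + 1)) - h 0 = -(h 0 / ((n:ℝ) + 1)) := by
        have : ((n:ℝ) + 1) ≠ 0 := by positivity
        field_simp
        ring
      rw [ContinuousWithinAt, hD]
      simp only [if_pos rfl]
      rw [← halg]
      apply hlim.congr'
      filter_upwards [self_mem_nhdsWithin] with t ht'
      rw [if_neg (ne_of_gt ht'.1)]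
      ring
    · have hg : ContinuousAt (fun t => (n : ℝ) * primF n h t / t ^ (n + 1) - h t) t := by
        exact (((primF_cont hh).continuousAt.const_mul _).div
          ((continuous_pow (n+1)).continuousAt) (pow_ne_zero _ htne)).sub hh.continuousAt
      have hev : ∀ᶠ x in 𝓝 t, (fun t => (n : ℝ) * primF n h t / t ^ (n + 1) - h t) x = D x := by
        filter_upwards [isOpen_compl_singleton.mem_nhds htne] with x hx
        simp only [mem_compl_iff, mem_singleton_iff] at hx
        rw [hD]; simp only [if_neg hx]
      exact (hg.congr hev).continuousWithinAt
  have key : ContDiffOn ℝ (0 + 1) (Wfn n h) (Icc 0 δ) := by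
    rw [contDiffOn_succ_iff_derivWithin (uniqueDiffOn_Icc hδ)]
    refine ⟨fun t ht => (hDat t ht).differentiableWithinAt, by simp, ?_⟩
    rw [contDiffOn_zero]
    apply hDcont.congr
    intro t ht
    exact (hDat t ht).derivWithin ((uniqueDiffOn_Icc hδ) t ht)
  simpa using key

lemma Wfn_diff_bound {n : ℕ} {h₁ h₂ : ℝ → ℝ} (hh₁ : Continuous h₁) (hh₂ : Continuous h₂)
    {η t : ℝ} (ht : 0 ≤ t) (hη : ∀ s ∈ Icc 0 t, |h₁ s - h₂ s| ≤ η) :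
    |Wfn n h₁ t - Wfn n h₂ t| ≤ η * t := by
  have hη0 : 0 ≤ η := le_trans (abs_nonneg _) (hη 0 ⟨le_refl 0, ht⟩)
  rcases eq_or_ne t 0 with rfl | htne
  · simp [Wfn_zero]
  · have htp : 0 < t := lt_of_le_of_ne ht (Ne.symm htne)
    have hint1 : IntervalIntegrable (fun s => s ^ n * h₁ s) MeasureTheory.volume 0 t :=
      (integrand_cont hh₁).intervalIntegrable _ _
    have hint2 : IntervalIntegrable (fun s => s ^ n * h₂ s) MeasureTheory.volume 0 t :=
      (integrand_cont hh₂).intervalIntegrable _ _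
    have key : Wfn n h₁ t - Wfn n h₂ t
        = -(1 / t ^ n) * ∫ s in (0:ℝ)..t, (s ^ n * h₁ s - s ^ n * h₂ s) := by
      rw [intervalIntegral.integral_sub hint1 hint2, Wfn, Wfn, primF, primF]
      ring
    have hbound : |∫ s in (0:ℝ)..t, (s ^ n * h₁ s - s ^ n * h₂ s)| ≤ t ^ n * η * |t - 0| := by
      have hb : ∀ s ∈ Ι (0:ℝ) t, ‖s ^ n * h₁ s - s ^ n * h₂ s‖ ≤ t ^ n * η := by
        intro s hs
        rw [uIoc_of_le htp.le] at hs
        have h0s : 0 < s := hs.1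
        have hst : s ≤ t := hs.2
        have : s ^ n * h₁ s - s ^ n * h₂ s = s ^ n * (h₁ s - h₂ s) := by ring
        rw [this, Real.norm_eq_abs, abs_mul, abs_pow, abs_of_pos h0s]
        exact mul_le_mul (pow_le_pow_left₀ h0s.le hst n) (hη s ⟨h0s.le, hst⟩)
          (abs_nonneg _) (by positivity)
      have := intervalIntegral.norm_integral_le_of_norm_le_const hb
      rwa [Real.norm_eq_abs] at this
    rw [key, abs_mul, abs_neg, abs_div, abs_one, abs_pow, abs_of_pos htp]
    rw [div_mul_eq_mul_div, one_mul, div_le_iff₀ (by positivity)]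
    calc |∫ s in (0:ℝ)..t, (s ^ n * h₁ s - s ^ n * h₂ s)| ≤ t ^ n * η * |t - 0| := hbound
      _ = η * t * t ^ n := by rw [sub_zero, abs_of_pos htp]; ring



/-- local existence for the singular IVP: there is `δ > 0` and a `C²`
solution `u` on `[0,δ]` of the radial IVP, which satisfies (and is, in a closed ball of
`C([0,δ])` around the constant `ζ`, the unique solution of) the fixed point equation
`u(r) = ζ + ∫₀^r (φ')⁻¹(-(1/t^{N-1}) ∫₀^t s^{N-1} λ f(u(s)) ds) dt`,
where `(φ')⁻¹(y) = y/√(1+y²)`. -/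
theorem local_existence_singular_ivp
    (N : ℕ) (hN : 2 ≤ N) (lam : ℝ) (hlam : 0 < lam) (ζ : ℝ)
    (f : ℝ → ℝ) (hfLip : LocallyLipschitz f) :
    ∃ δ > (0:ℝ), ∃ u u' : ℝ → ℝ,
      ContDiffOn ℝ 2 u (Set.Icc 0 δ) ∧
      (∀ r ∈ Set.Icc (0:ℝ) δ, HasDerivWithinAt u (u' r) (Set.Icc 0 δ) r) ∧
      u 0 = ζ ∧ u' 0 = 0 ∧
      (∀ r ∈ Set.Icc (0:ℝ) δ, |u' r| < 1) ∧
      (∀ r ∈ Set.Ioc (0:ℝ) δ,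
        HasDerivWithinAt (fun s => u' s / Real.sqrt (1 - (u' s) ^ 2))
          (-(((N : ℝ) - 1) / r * (u' r / Real.sqrt (1 - (u' r) ^ 2)) + lam * f (u r)))
          (Set.Icc 0 δ) r) ∧
      (∀ r ∈ Set.Icc (0:ℝ) δ,
        u r = ζ + ∫ t in (0:ℝ)..r,
          (fun y => y / Real.sqrt (1 + y ^ 2))
            (-(1 / t ^ (N - 1)) * ∫ s in (0:ℝ)..t, s ^ (N - 1) * (lam * f (u s)))) ∧
      -- uniqueness of the fixed point in a closed ball of `C([0,δ])` centered at `ζ`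
      ∃ ε > (0:ℝ),
        (∀ r ∈ Set.Icc (0:ℝ) δ, |u r - ζ| ≤ ε) ∧
        ∀ v : ℝ → ℝ, ContinuousOn v (Set.Icc 0 δ) →
          (∀ r ∈ Set.Icc (0:ℝ) δ, |v r - ζ| ≤ ε) →
          (∀ r ∈ Set.Icc (0:ℝ) δ,
            v r = ζ + ∫ t in (0:ℝ)..r,
              (fun y => y / Real.sqrt (1 + y ^ 2))
                (-(1 / t ^ (N - 1)) * ∫ s in (0:ℝ)..t, s ^ (N - 1) * (lam * f (v s)))) →
          ∀ r ∈ Set.Icc (0:ℝ) δ, v r = u r := by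
  classical
  obtain ⟨K, t0, ht0, hK⟩ := hfLip ζ
  obtain ⟨ε, hε, hball⟩ := Metric.nhds_basis_closedBall.mem_iff.1 ht0
  set Kr : ℝ := (K : ℝ) with hKrdef
  have hKr0 : 0 ≤ Kr := K.coe_nonneg
  set M : ℝ := |f ζ| + Kr * ε + 1 with hMdef
  have hM0 : 0 < M := by positivity
  have hcf : Continuous f := hfLip.continuous
  have hζmem : ζ ∈ Metric.closedBall ζ ε := Metric.mem_closedBall_self hε.le
  have hfb : ∀ x ∈ Metric.closedBall ζ ε, |f x| ≤ M := by
    intro x hx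
    have hd : dist (f x) (f ζ) ≤ Kr * dist x ζ := hK.dist_le_mul x (hball hx) ζ (hball hζmem)
    rw [Real.dist_eq, Real.dist_eq] at hd
    have hxd : |x - ζ| ≤ ε := Metric.mem_closedBall.1 hx
    have : |f x - f ζ| ≤ Kr * ε := hd.trans (mul_le_mul_of_nonneg_left hxd hKr0)
    calc |f x| ≤ |f x - f ζ| + |f ζ| := by
          have := abs_sub_abs_le_abs_sub (f x) (f ζ); linarith [abs_sub_abs_le_abs_sub (f x) (f ζ)]
      _ ≤ Kr * ε + |f ζ| := by linarith
      _ ≤ M := by rw [hMdef]; linarith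
  set n : ℕ := N - 1 with hndef
  have hn1 : 1 ≤ n := by omega
  have hNn : (N : ℝ) - 1 = (n : ℝ) := by
    rw [hndef]; push_cast [Nat.cast_sub (by omega : 1 ≤ N)]; ring
  set C : ℝ := lam * M with hCdef
  have hC0 : 0 < C := mul_pos hlam hM0
  set δ : ℝ := min 1 (min (ε / (lam * M)) (1 / (2 * lam * (Kr + 1)))) with hδdef
  have hδ : 0 < δ :=
    lt_min one_pos (lt_min (div_pos hε (mul_pos hlam hM0)) (by positivity))
  have hδ1 : δ ≤ 1 := min_le_left _ _
  have hδM : C * δ ≤ ε := by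
    have h1 : δ ≤ ε / (lam * M) := le_trans (min_le_right _ _) (min_le_left _ _)
    rw [le_div_iff₀ (mul_pos hlam hM0)] at h1
    rw [hCdef]; linarith
  have hδK : lam * (Kr + 1) * δ ≤ 1 / 2 := by
    have h1 : δ ≤ 1 / (2 * lam * (Kr + 1)) := le_trans (min_le_right _ _) (min_le_right _ _)
    rw [le_div_iff₀ (by positivity)] at h1
    nlinarith
  -- properties of admissible functions
  have hhv : ∀ v : ℝ → ℝ, Continuous v → (∀ s, |v s - ζ| ≤ ε) →
      Continuous (fun s => lam * f (v s)) ∧ (∀ s, |lam * f (v s)| ≤ C) := by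
    intro v hv hb
    refine ⟨continuous_const.mul (hcf.comp hv), fun s => ?_⟩
    rw [abs_mul, abs_of_pos hlam, hCdef]
    exact mul_le_mul_of_nonneg_left
      (hfb _ (Metric.mem_closedBall.2 (by rw [Real.dist_eq]; exact hb s))) hlam.le
  have hgcont : ∀ v : ℝ → ℝ, Continuous v → (∀ s, |v s - ζ| ≤ ε) →
      Continuous (fun t => psiFn (Wfn n (fun s => lam * f (v s)) t)) := by
    intro v hv hb
    exact psi_lipschitz.continuous.comp (Wfn_cont (hhv v hv hb).1 (hhv v hv hb).2)
  have hgbd : ∀ v : ℝ → ℝ, Continuous v → (∀ s, |v s - ζ| ≤ ε) →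
      ∀ t, |psiFn (Wfn n (fun s => lam * f (v s)) t)| ≤ C * |t| := by
    intro v hv hb t
    exact le_trans (psi_abs_le _) (Wfn_bound (hhv v hv hb).2 t)
  -- the integral bound: |T v r - ζ| ≤ ε
  have hTbound : ∀ v : ℝ → ℝ, Continuous v → (∀ s, |v s - ζ| ≤ ε) → ∀ r ∈ Icc (0:ℝ) δ,
      |(∫ t in (0:ℝ)..r, psiFn (Wfn n (fun s => lam * f (v s)) t))| ≤ ε := by
    intro v hv hb r hr
    have hbd : ∀ t ∈ Ι (0:ℝ) r, ‖psiFn (Wfn n (fun s => lam * f (v s)) t)‖ ≤ C * δ := by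
      intro t ht
      rw [uIoc_of_le hr.1] at ht
      rw [Real.norm_eq_abs]
      refine le_trans (hgbd v hv hb t) ?_
      rw [abs_of_pos ht.1]
      exact mul_le_mul_of_nonneg_left (ht.2.trans hr.2) hC0.le
    have := intervalIntegral.norm_integral_le_of_norm_le_const hbd
    rw [Real.norm_eq_abs, sub_zero] at this
    calc |(∫ t in (0:ℝ)..r, psiFn (Wfn n (fun s => lam * f (v s)) t))|
        ≤ C * δ * |r| := this
      _ ≤ ε * 1 := by
          apply mul_le_mul hδM _ (abs_nonneg r) hε.le
          rw [abs_of_nonneg hr.1]; exact hr.2.trans hδ1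
      _ = ε := mul_one ε
  -- the contraction bound
  have hTdiff : ∀ v w : ℝ → ℝ, Continuous v → Continuous w →
      (∀ s, |v s - ζ| ≤ ε) → (∀ s, |w s - ζ| ≤ ε) →
      ∀ d, 0 ≤ d → (∀ s ∈ Icc (0:ℝ) δ, |v s - w s| ≤ d) → ∀ r ∈ Icc (0:ℝ) δ,
      |(∫ t in (0:ℝ)..r, psiFn (Wfn n (fun s => lam * f (v s)) t)) -
        (∫ t in (0:ℝ)..r, psiFn (Wfn n (fun s => lam * f (w s)) t))| ≤ 1 / 2 * d := by
    intro v w hv hw hbv hbw d hd0 hdle r hr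
    have hmemB : ∀ z : ℝ, |z - ζ| ≤ ε → z ∈ t0 := by
      intro z hz
      exact hball (Metric.mem_closedBall.2 (by rw [Real.dist_eq]; exact hz))
    have hηb : ∀ t ∈ Icc (0:ℝ) δ, ∀ s ∈ Icc (0:ℝ) t,
        |lam * f (v s) - lam * f (w s)| ≤ lam * Kr * d := by
      intro t ht s hs
      have hsδ : s ∈ Icc (0:ℝ) δ := ⟨hs.1, hs.2.trans ht.2⟩
      have hlips : dist (f (v s)) (f (w s)) ≤ Kr * dist (v s) (w s) :=
        hK.dist_le_mul _ (hmemB _ (hbv s)) _ (hmemB _ (hbw s))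
      rw [Real.dist_eq, Real.dist_eq] at hlips
      have : |f (v s) - f (w s)| ≤ Kr * d :=
        hlips.trans (mul_le_mul_of_nonneg_left (hdle s hsδ) hKr0)
      calc |lam * f (v s) - lam * f (w s)| = lam * |f (v s) - f (w s)| := by
            rw [← abs_of_pos hlam, ← abs_mul, mul_sub, abs_of_pos hlam]
        _ ≤ lam * (Kr * d) := mul_le_mul_of_nonneg_left this hlam.le
        _ = lam * Kr * d := by ring
    have hint1 : IntervalIntegrable (fun t => psiFn (Wfn n (fun s => lam * f (v s)) t))
        MeasureTheory.volume 0 r := (hgcont v hv hbv).intervalIntegrable _ _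
    have hint2 : IntervalIntegrable (fun t => psiFn (Wfn n (fun s => lam * f (w s)) t))
        MeasureTheory.volume 0 r := (hgcont w hw hbw).intervalIntegrable _ _
    rw [← intervalIntegral.integral_sub hint1 hint2]
    have hbd : ∀ t ∈ Ι (0:ℝ) r, ‖psiFn (Wfn n (fun s => lam * f (v s)) t) -
        psiFn (Wfn n (fun s => lam * f (w s)) t)‖ ≤ lam * Kr * d * δ := by
      intro t ht
      rw [uIoc_of_le hr.1] at ht
      have htδ : t ∈ Icc (0:ℝ) δ := ⟨ht.1.le, ht.2.trans hr.2⟩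
      rw [Real.norm_eq_abs]
      calc |psiFn (Wfn n (fun s => lam * f (v s)) t) - psiFn (Wfn n (fun s => lam * f (w s)) t)|
          ≤ |Wfn n (fun s => lam * f (v s)) t - Wfn n (fun s => lam * f (w s)) t| :=
            psi_lip_bound _ _
        _ ≤ lam * Kr * d * t :=
            Wfn_diff_bound (hhv v hv hbv).1 (hhv w hw hbw).1 ht.1.le (hηb t htδ)
        _ ≤ lam * Kr * d * δ :=
            mul_le_mul_of_nonneg_left htδ.2 (by positivity)
    have := intervalIntegral.norm_integral_le_of_norm_le_const hbd
    rw [Real.norm_eq_abs, sub_zero] at this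
    have hnon : 0 ≤ lam * Kr * d * δ :=
      mul_nonneg (mul_nonneg (mul_nonneg hlam.le hKr0) hd0) hδ.le
    have h2 : lam * Kr * d * δ * |r| ≤ lam * Kr * d * δ := by
      rw [abs_of_nonneg hr.1]
      calc lam * Kr * d * δ * r ≤ lam * Kr * d * δ * 1 :=
            mul_le_mul_of_nonneg_left (hr.2.trans hδ1) hnon
        _ = lam * Kr * d * δ := mul_one _
    have h3 : lam * Kr * d * δ ≤ 1 / 2 * d := by
      have h5 := mul_le_mul_of_nonneg_right hδK hd0
      have h4 : lam * Kr * δ * d ≤ lam * (Kr + 1) * δ * d := by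
        apply mul_le_mul_of_nonneg_right _ hd0
        nlinarith [mul_pos hlam hδ]
      nlinarith
    linarith
  -- Banach fixed point setup
  haveI : CompactSpace (Icc (0:ℝ) δ) := isCompact_iff_compactSpace.1 isCompact_Icc
  set cζ : C(Icc (0:ℝ) δ, ℝ) := ContinuousMap.const _ ζ with hcζ
  set S : Set C(Icc (0:ℝ) δ, ℝ) := Metric.closedBall cζ ε with hSdef
  have hextc : ∀ u : C(Icc (0:ℝ) δ, ℝ), Continuous (Set.IccExtend hδ.le ⇑u) :=
    fun u => u.continuous.Icc_extend'
  have hextb : ∀ u : C(Icc (0:ℝ) δ, ℝ), u ∈ S → ∀ s, |Set.IccExtend hδ.le ⇑u s - ζ| ≤ ε := by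
    intro u hu s
    have h1 : dist (u (projIcc 0 δ hδ.le s)) (cζ (projIcc 0 δ hδ.le s)) ≤ dist u cζ :=
      ContinuousMap.dist_apply_le_dist _
    have h2 : dist u cζ ≤ ε := Metric.mem_closedBall.1 hu
    have h3 : cζ (projIcc 0 δ hδ.le s) = ζ := rfl
    rw [h3, Real.dist_eq] at h1
    exact h1.trans h2
  have hexta : ∀ (u : C(Icc (0:ℝ) δ, ℝ)) (r : ℝ) (hr : r ∈ Icc (0:ℝ) δ),
      Set.IccExtend hδ.le ⇑u r = u ⟨r, hr⟩ :=
    fun u r hr => Set.IccExtend_of_mem hδ.le _ hr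
  have hmem' : ∀ u : C(Icc (0:ℝ) δ, ℝ), u ∈ S → ∀ g : C(Icc (0:ℝ) δ, ℝ),
      (∀ x : Icc (0:ℝ) δ, g x = ζ + ∫ t in (0:ℝ)..(x:ℝ),
        psiFn (Wfn n (fun s => lam * f (Set.IccExtend hδ.le ⇑u s)) t)) → g ∈ S := by
    intro u hu g hg
    rw [hSdef, Metric.mem_closedBall, ContinuousMap.dist_le hε.le]
    intro x
    rw [hg x]
    have h3 : cζ x = ζ := rfl
    rw [h3, Real.dist_eq, add_sub_cancel_left]
    exact hTbound _ (hextc u) (hextb u hu) x x.2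
  let T : S → S := fun u =>
    ⟨⟨fun x => ζ + ∫ t in (0:ℝ)..(x:ℝ),
        psiFn (Wfn n (fun s => lam * f (Set.IccExtend hδ.le ⇑(u:C(Icc (0:ℝ) δ, ℝ)) s)) t),
      continuous_const.add
        ((intervalIntegral.continuous_primitive
          (fun a b => (hgcont _ (hextc u) (hextb u u.2)).intervalIntegrable a b) 0).comp
          continuous_subtype_val)⟩,
      hmem' u u.2 _ (fun _ => rfl)⟩
  have hTlip : ∀ u v : S, dist (T u) (T v) ≤ 1 / 2 * dist u v := by
    intro u v
    rw [Subtype.dist_eq, ContinuousMap.dist_le (by positivity)]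
    intro x
    show dist (ζ + _) (ζ + _) ≤ _
    rw [Real.dist_eq, add_sub_add_left_eq_sub]
    have hdle : ∀ s ∈ Icc (0:ℝ) δ,
        |Set.IccExtend hδ.le ⇑(u:C(Icc (0:ℝ) δ, ℝ)) s -
          Set.IccExtend hδ.le ⇑(v:C(Icc (0:ℝ) δ, ℝ)) s| ≤ dist u v := by
      intro s hs
      rw [hexta _ s hs, hexta _ s hs, Subtype.dist_eq]
      have := ContinuousMap.dist_apply_le_dist (f := (u:C(Icc (0:ℝ) δ, ℝ)))
        (g := (v:C(Icc (0:ℝ) δ, ℝ))) ⟨s, hs⟩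
      rwa [Real.dist_eq] at this
    exact hTdiff _ _ (hextc _) (hextc _) (hextb _ u.2) (hextb _ v.2)
      (dist u v) dist_nonneg hdle x x.2
  haveI : Nonempty S := ⟨⟨cζ, Metric.mem_closedBall_self hε.le⟩⟩
  haveI : CompleteSpace S := (Metric.isClosed_closedBall (x := cζ) (ε := ε)).completeSpace_coe
  have hcontr : ContractingWith (1/2 : NNReal) T := by
    constructor
    · rw [← NNReal.coe_lt_coe]; norm_num
    · apply LipschitzWith.of_dist_le_mul
      intro u v
      have h := hTlip u v
      have : ((1/2 : NNReal) : ℝ) = 1 / 2 := by norm_num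
      rw [this]
      exact h
  set p : S := hcontr.fixedPoint with hpdef
  have hfixp : T p = p := hcontr.fixedPoint_isFixedPt
  set U : ℝ → ℝ := Set.IccExtend hδ.le ⇑(p : C(Icc (0:ℝ) δ, ℝ)) with hUdef
  have hUc : Continuous U := hextc _
  have hUb : ∀ s, |U s - ζ| ≤ ε := hextb _ p.2
  have hfixEq : ∀ r ∈ Icc (0:ℝ) δ,
      U r = ζ + ∫ t in (0:ℝ)..r, psiFn (Wfn n (fun s => lam * f (U s)) t) := by
    intro r hr
    have h1 : ((T p : S) : C(Icc (0:ℝ) δ, ℝ)) ⟨r, hr⟩ = (p : C(Icc (0:ℝ) δ, ℝ)) ⟨r, hr⟩ := by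
      rw [hfixp]
    have h2 : ((T p : S) : C(Icc (0:ℝ) δ, ℝ)) ⟨r, hr⟩
        = ζ + ∫ t in (0:ℝ)..r, psiFn (Wfn n (fun s => lam * f (U s)) t) := rfl
    conv_lhs => rw [hUdef]
    rw [hexta _ r hr, ← h1]
    rfl
  have hh0 : Continuous (fun s => lam * f (U s)) := (hhv U hUc hUb).1
  have hgc : Continuous (fun t => psiFn (Wfn n (fun s => lam * f (U s)) t)) := hgcont U hUc hUb
  have hderivU : ∀ r ∈ Icc (0:ℝ) δ,
      HasDerivWithinAt U (psiFn (Wfn n (fun s => lam * f (U s)) r)) (Icc 0 δ) r := by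
    intro r hr
    have h1 : HasDerivAt (fun x => ζ + ∫ t in (0:ℝ)..x, psiFn (Wfn n (fun s => lam * f (U s)) t))
        (psiFn (Wfn n (fun s => lam * f (U s)) r)) r :=
      ((hgc.integral_hasStrictDerivAt 0 r).hasDerivAt).const_add ζ
    exact (h1.hasDerivWithinAt).congr (fun y hy => hfixEq y hy) (hfixEq r hr)
  refine ⟨δ, hδ, U, fun r => psiFn (Wfn n (fun s => lam * f (U s)) r),
    ?_, ?_, ?_, ?_, ?_, ?_, ?_, ?_⟩
  · -- ContDiffOn 2
    have hW1 : ContDiffOn ℝ 1 (Wfn n (fun s => lam * f (U s))) (Icc 0 δ) :=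
      Wfn_contDiffOn hh0 hn1 hδ
    have hg1 : ContDiffOn ℝ 1 (fun t => psiFn (Wfn n (fun s => lam * f (U s)) t)) (Icc 0 δ) :=
      psi_contDiff.comp_contDiffOn hW1
    rw [show (2 : WithTop ℕ∞) = 1 + 1 from rfl, contDiffOn_succ_iff_derivWithin (uniqueDiffOn_Icc hδ)]
    refine ⟨fun r hr => (hderivU r hr).differentiableWithinAt, by simp, ?_⟩
    exact hg1.congr (fun r hr => (hderivU r hr).derivWithin (uniqueDiffOn_Icc hδ r hr))
  · exact fun r hr => hderivU r hr
  · rw [hfixEq 0 (left_mem_Icc.2 hδ.le)]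
    simp [intervalIntegral.integral_same]
  · show psiFn (Wfn n (fun s => lam * f (U s)) 0) = 0
    rw [Wfn_zero, psi_zero]
  · exact fun r hr => psi_abs_lt_one _
  · -- the singular ODE
    intro r hr
    have hrne : r ≠ 0 := ne_of_gt hr.1
    have hrIcc : r ∈ Icc (0:ℝ) δ := ⟨hr.1.le, hr.2⟩
    have hW := (Wfn_hasDerivAt hh0 hn1 hrne).hasDerivWithinAt (s := Icc (0:ℝ) δ)
    have hfe : (fun s => psiFn (Wfn n (fun s' => lam * f (U s')) s) /
        Real.sqrt (1 - psiFn (Wfn n (fun s' => lam * f (U s')) s) ^ 2))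
        = Wfn n (fun s' => lam * f (U s')) := funext fun s => psi_inv _
    show HasDerivWithinAt (fun s => psiFn (Wfn n (fun s' => lam * f (U s')) s) /
        Real.sqrt (1 - psiFn (Wfn n (fun s' => lam * f (U s')) s) ^ 2)) _ _ _
    rw [hfe]
    refine hW.congr_deriv ?_
    rw [psi_inv, hNn, Wfn]
    field_simp
    ring
  · -- fixed point equation
    intro r hr
    have h := hfixEq r hr
    rw [hndef] at h
    simpa only [psiFn, Wfn, primF] using h
  · -- uniqueness
    refine ⟨ε, hε, fun r _ => hUb r, ?_⟩
    intro v hvc hvb hvfix r hr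
    set vt : ℝ → ℝ := Set.IccExtend hδ.le ((Icc (0:ℝ) δ).restrict v) with hvtdef
    have hvtc : Continuous vt := (ContinuousOn.restrict hvc).Icc_extend'
    have hvteq : ∀ s ∈ Icc (0:ℝ) δ, vt s = v s := fun s hs => by
      rw [hvtdef, Set.IccExtend_of_mem hδ.le _ hs]; rfl
    have hvtb : ∀ s, |vt s - ζ| ≤ ε := by
      intro s
      have : vt s = v ((projIcc 0 δ hδ.le s) : ℝ) := rfl
      rw [this]
      exact hvb _ (projIcc 0 δ hδ.le s).2
    have hvtfix : ∀ r' ∈ Icc (0:ℝ) δ,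
        vt r' = ζ + ∫ t in (0:ℝ)..r', psiFn (Wfn n (fun s => lam * f (vt s)) t) := by
      intro r' hr'
      rw [hvteq r' hr', hvfix r' hr']
      congr 1
      apply intervalIntegral.integral_congr
      intro t ht
      rw [uIcc_of_le hr'.1] at ht
      have htδ : t ∈ Icc (0:ℝ) δ := ⟨ht.1, ht.2.trans hr'.2⟩
      have hinner : (∫ s in (0:ℝ)..t, s ^ n * (lam * f (v s)))
          = ∫ s in (0:ℝ)..t, s ^ n * (lam * f (vt s)) := by
        apply intervalIntegral.integral_congr
        intro s hs
        rw [uIcc_of_le ht.1] at hs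
        show s ^ n * (lam * f (v s)) = s ^ n * (lam * f (vt s))
        rw [← hvteq s ⟨hs.1, hs.2.trans htδ.2⟩]
      simp only [psiFn, Wfn, primF]
      rw [← hinner]
    obtain ⟨r₀, hr₀, hmax⟩ := isCompact_Icc.exists_isMaxOn (Set.nonempty_Icc.2 hδ.le)
      ((hvtc.sub hUc).abs).continuousOn
    set d := |vt r₀ - U r₀| with hddef
    have hd0 : 0 ≤ d := abs_nonneg _
    have hdle : ∀ s ∈ Icc (0:ℝ) δ, |vt s - U s| ≤ d := fun s hs => hmax hs
    have hhalf : ∀ r' ∈ Icc (0:ℝ) δ, |vt r' - U r'| ≤ 1 / 2 * d := by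
      intro r' hr'
      rw [hvtfix r' hr', hfixEq r' hr', add_sub_add_left_eq_sub]
      exact hTdiff vt U hvtc hUc hvtb hUb d hd0 hdle r' hr'
    have hd2 : d ≤ 1 / 2 * d := hhalf r₀ hr₀
    have hdz : d ≤ 0 := by linarith
    have hzero : |vt r - U r| = 0 :=
      le_antisymm ((hhalf r hr).trans (by linarith)) (abs_nonneg _)
    have : vt r = U r := by
      have := abs_eq_zero.1 hzero
      linarith [this]
    rw [← hvteq r hr]
    exact this
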